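/- The correlation measure C_A^{(2)} is monotone nonincreasing under local channels: for any bipartite state ρ_{AB} and any quantum channels Λ_A on A and Λ_B on B, C_A^{(2)}((Λ_A ⊗ Λ_B)(ρ_{AB})) ≤ C_A^{(2)}(ρ_{AB}). -/

import Mathlib

open Matrix BigOperators ComplexOrder Kronecker

def IsDensity {n : Type*} [Fintype n] [DecidableEq n] (ρ : Matrix n n ℂ) : Prop :=
  ρ.PosSemidef ∧ ρ.trace = 1

noncomputable def traceNorm {d : ℕ} (A : Matrix (Fin d) (Fin d) ℂ) : ℝ :=
  if h : A.IsHermitian then ∑ i, |h.eigenvalues i| else 0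

noncomputable def ptraceA {dA dB : ℕ}
    (M : Matrix (Fin dA × Fin dB) (Fin dA × Fin dB) ℂ) : Matrix (Fin dB) (Fin dB) ℂ :=
  Matrix.of fun i j => ∑ a, M (a, i) (a, j)

/-- The correlation measure `C_A^{(2)}`: the supremum, over two-outcome POVMs on `A`
that are maximally entropic for `ρ` (both outcome probabilities equal `1/2`), of a
quarter of the trace distance of the two post-measurement states on `B`. -/
noncomputable def CA2 {dA dB : ℕ}
    (ρ : Matrix (Fin dA × Fin dB) (Fin dA × Fin dB) ℂ) : ℝ :=
  sSup { x : ℝ | ∃ P₁ P₂ : Matrix (Fin dA) (Fin dA) ℂ,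
    P₁.PosSemidef ∧ P₂.PosSemidef ∧ P₁ + P₂ = 1 ∧
    (ρ * (P₁ ⊗ₖ (1 : Matrix (Fin dB) (Fin dB) ℂ))).trace = 1/2 ∧
    (ρ * (P₂ ⊗ₖ (1 : Matrix (Fin dB) (Fin dB) ℂ))).trace = 1/2 ∧
    x = traceNorm ((2 : ℂ) • ptraceA (ρ * (P₁ ⊗ₖ (1 : Matrix (Fin dB) (Fin dB) ℂ)))
          - (2 : ℂ) • ptraceA (ρ * (P₂ ⊗ₖ (1 : Matrix (Fin dB) (Fin dB) ℂ)))) / 4 }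

/-! ### Auxiliary lemmas about the trace norm -/

section TraceNormLemmas

variable {d m : ℕ}

lemma traceNorm_eq {A : Matrix (Fin d) (Fin d) ℂ} (hA : A.IsHermitian) :
    traceNorm A = ∑ i, |hA.eigenvalues i| := dif_pos hA

lemma psd_diag_re_nonneg {A : Matrix (Fin d) (Fin d) ℂ} (hA : A.PosSemidef) (i : Fin d) :
    0 ≤ (A i i).re := by
  have := hA.re_dotProduct_nonneg (Pi.single i 1)
  simpa [dotProduct, mulVec, Pi.single_apply, Finset.mul_sum] using this

lemma pair_le_traceNorm (M X : Matrix (Fin d) (Fin d) ℂ) (hM : M.IsHermitian)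
    (h1 : (1 - X).PosSemidef) (h2 : (1 + X).PosSemidef) :
    ((M * X).trace).re ≤ traceNorm M := by
  set U : Matrix (Fin d) (Fin d) ℂ := (hM.eigenvectorUnitary : Matrix (Fin d) (Fin d) ℂ) with hUdef
  have hU := hM.eigenvectorUnitary.2
  rw [Unitary.mem_iff] at hU
  have hUs : star U * U = 1 := hU.1
  have hUss : U * star U = 1 := hU.2
  set Y : Matrix (Fin d) (Fin d) ℂ := star U * X * U with hY
  have htr : (M * X).trace
      = ∑ i, (RCLike.ofReal (hM.eigenvalues i) : ℂ) * Y i i := by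
    have hMX : M * X = U * ((diagonal (RCLike.ofReal ∘ hM.eigenvalues)) * (star U * X)) := by
      conv_lhs => rw [hM.spectral_theorem]
      simp only [Unitary.conjStarAlgAut_apply, mul_assoc, hUdef]
    rw [hMX, Matrix.trace_mul_comm]
    have h3 : (diagonal (RCLike.ofReal ∘ hM.eigenvalues) * (star U * X)) * U
        = diagonal (RCLike.ofReal ∘ hM.eigenvalues) * Y := by
      simp only [hY, mul_assoc]
    rw [h3, Matrix.trace]
    simp [Matrix.diag, Matrix.diagonal_mul, Function.comp]
  -- diagonal entries of Y have real part in [-1, 1]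
  have hYb : ∀ i, |(Y i i).re| ≤ 1 := by
    intro i
    have hc1 : (star U * (1 - X) * U).PosSemidef := by
      simpa [Matrix.star_eq_conjTranspose] using h1.conjTranspose_mul_mul_same U
    have hc2 : (star U * (1 + X) * U).PosSemidef := by
      simpa [Matrix.star_eq_conjTranspose] using h2.conjTranspose_mul_mul_same U
    have e1 : star U * (1 - X) * U = 1 - Y := by
      rw [hY]; rw [Matrix.mul_sub, Matrix.sub_mul, Matrix.mul_one, hUs]
    have e2 : star U * (1 + X) * U = 1 + Y := by
      rw [hY]; rw [Matrix.mul_add, Matrix.add_mul, Matrix.mul_one, hUs]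
    have d1 := psd_diag_re_nonneg (e1 ▸ hc1) i
    have d2 := psd_diag_re_nonneg (e2 ▸ hc2) i
    rw [abs_le]
    constructor
    · have : ((1 : Matrix (Fin d) (Fin d) ℂ) + Y) i i = 1 + Y i i := by
        simp [Matrix.add_apply, Matrix.one_apply]
      rw [this] at d2; simp at d2; linarith
    · have : ((1 : Matrix (Fin d) (Fin d) ℂ) - Y) i i = 1 - Y i i := by
        simp [Matrix.sub_apply, Matrix.one_apply]
      rw [this] at d1; simp at d1; linarith
  rw [htr, traceNorm_eq hM]
  rw [Complex.re_sum]
  apply Finset.sum_le_sum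
  intro i _
  have : ((RCLike.ofReal (hM.eigenvalues i) : ℂ) * Y i i).re = hM.eigenvalues i * (Y i i).re := by
    simp [Complex.mul_re]
  rw [this]
  calc hM.eigenvalues i * (Y i i).re ≤ |hM.eigenvalues i * (Y i i).re| := le_abs_self _
  _ = |hM.eigenvalues i| * |(Y i i).re| := abs_mul _ _
  _ ≤ |hM.eigenvalues i| * 1 := by
      exact mul_le_mul_of_nonneg_left (hYb i) (abs_nonneg _)
  _ = _ := mul_one _

set_option linter.unreachableTactic false in
set_option linter.unusedTactic false in
lemma exists_dual (M : Matrix (Fin d) (Fin d) ℂ) (hM : M.IsHermitian) :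
    ∃ X : Matrix (Fin d) (Fin d) ℂ,
      (1 - X).PosSemidef ∧ (1 + X).PosSemidef ∧ ((M * X).trace).re = traceNorm M := by
  set U : Matrix (Fin d) (Fin d) ℂ := (hM.eigenvectorUnitary : Matrix (Fin d) (Fin d) ℂ) with hUdef
  have hU := hM.eigenvectorUnitary.2
  rw [Unitary.mem_iff] at hU
  have hUs : star U * U = 1 := hU.1
  have hUss : U * star U = 1 := hU.2
  set s : Fin d → ℝ := fun i => if hM.eigenvalues i < 0 then -1 else 1 with hs
  refine ⟨U * diagonal (fun i => (s i : ℂ)) * star U, ?_, ?_, ?_⟩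
  · have : (1 : Matrix (Fin d) (Fin d) ℂ) - U * diagonal (fun i => (s i : ℂ)) * star U
        = U * diagonal (fun i => ((1 - s i : ℝ) : ℂ)) * star U := by
      have : (diagonal (fun i => ((1 - s i : ℝ) : ℂ))) =
          1 - diagonal (fun i => (s i : ℂ)) := by
        ext i j
        by_cases h : i = j <;>
          simp [Matrix.sub_apply, Matrix.one_apply, Matrix.diagonal_apply, h] <;> push_cast <;> ring
      rw [this, Matrix.mul_sub, Matrix.sub_mul, Matrix.mul_one, hUss]
    rw [this]
    have hd : Matrix.PosSemidef (diagonal (fun i => ((1 - s i : ℝ) : ℂ))) := by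
      apply Matrix.PosSemidef.diagonal
      intro i
      have : (0:ℝ) ≤ 1 - s i := by
        rw [hs]; dsimp only; split <;> norm_num
      exact Complex.zero_le_real.mpr this
    simpa [Matrix.star_eq_conjTranspose] using hd.mul_mul_conjTranspose_same U
  · have : (1 : Matrix (Fin d) (Fin d) ℂ) + U * diagonal (fun i => (s i : ℂ)) * star U
        = U * diagonal (fun i => ((1 + s i : ℝ) : ℂ)) * star U := by
      have : (diagonal (fun i => ((1 + s i : ℝ) : ℂ))) =
          1 + diagonal (fun i => (s i : ℂ)) := by
        ext i j
        by_cases h : i = j <;>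
          simp [Matrix.add_apply, Matrix.one_apply, Matrix.diagonal_apply, h] <;> push_cast <;> ring
      rw [this, Matrix.mul_add, Matrix.add_mul, Matrix.mul_one, hUss]
    rw [this]
    have hd : Matrix.PosSemidef (diagonal (fun i => ((1 + s i : ℝ) : ℂ))) := by
      apply Matrix.PosSemidef.diagonal
      intro i
      have : (0:ℝ) ≤ 1 + s i := by
        rw [hs]; dsimp only; split <;> norm_num
      exact Complex.zero_le_real.mpr this
    simpa [Matrix.star_eq_conjTranspose] using hd.mul_mul_conjTranspose_same U
  · have hMX : M * (U * diagonal (fun i => (s i : ℂ)) * star U)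
        = U * (diagonal (RCLike.ofReal ∘ hM.eigenvalues) * diagonal (fun i => (s i : ℂ))) * star U := by
      conv_lhs => rw [hM.spectral_theorem]
      calc (U * diagonal (RCLike.ofReal ∘ hM.eigenvalues) * star U) *
            (U * diagonal (fun i => (s i : ℂ)) * star U)
          = U * diagonal (RCLike.ofReal ∘ hM.eigenvalues) * (star U * U) *
            diagonal (fun i => (s i : ℂ)) * star U := by simp only [mul_assoc]
        _ = _ := by rw [hUs]; simp only [mul_one, mul_assoc]
    rw [hMX, Matrix.diagonal_mul_diagonal]
    rw [Matrix.trace_mul_cycle, hUs, Matrix.one_mul]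
    rw [Matrix.trace, traceNorm_eq hM]
    rw [Complex.re_sum]
    apply Finset.sum_congr rfl
    intro i _
    have : hM.eigenvalues i * s i = |hM.eigenvalues i| := by
      rw [hs]; dsimp only
      rcases lt_or_ge (hM.eigenvalues i) 0 with h | h
      · rw [if_pos h, abs_of_neg h]; ring
      · rw [if_neg (not_lt.mpr h), abs_of_nonneg h]; ring
    simp [Matrix.diag, ← this, Complex.mul_re]

lemma traceNorm_zero : traceNorm (0 : Matrix (Fin d) (Fin d) ℂ) = 0 := by
  have h0 : (0 : Matrix (Fin d) (Fin d) ℂ).IsHermitian := Matrix.isHermitian_zero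
  rw [traceNorm_eq h0]
  apply Finset.sum_eq_zero
  intro i _
  have := h0.eigenvalues_eq i
  simp [Matrix.mulVec, dotProduct] at this
  simp [this]

lemma posSemidef_sum {ι : Type*} (s : Finset ι) (f : ι → Matrix (Fin d) (Fin d) ℂ)
    (h : ∀ i ∈ s, (f i).PosSemidef) : (∑ i ∈ s, f i).PosSemidef := by
  refine Matrix.PosSemidef.of_dotProduct_mulVec_nonneg ?_ ?_
  · rw [Matrix.IsHermitian, Matrix.conjTranspose_sum]
    exact Finset.sum_congr rfl fun i hi => (h i hi).1
  · intro x
    have hmv : (∑ i ∈ s, f i) *ᵥ x = ∑ i ∈ s, (f i) *ᵥ x := by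
      ext j
      simp only [Matrix.mulVec, dotProduct, Matrix.sum_apply, Finset.sum_apply, Finset.sum_mul]
      rw [Finset.sum_comm]
    have hdp : star x ⬝ᵥ ∑ i ∈ s, (f i) *ᵥ x = ∑ i ∈ s, star x ⬝ᵥ ((f i) *ᵥ x) := by
      simp only [dotProduct, Finset.sum_apply, Finset.mul_sum]
      rw [Finset.sum_comm]
    rw [hmv, hdp]
    exact Finset.sum_nonneg fun i hi => (h i hi).dotProduct_mulVec_nonneg x

-- trace of product of PSD matrices has nonneg real part
open scoped MatrixOrder in
lemma trace_mul_psd_re_nonneg {A B : Matrix (Fin d) (Fin d) ℂ}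
    (hA : A.PosSemidef) (hB : B.PosSemidef) : 0 ≤ ((A * B).trace).re := by
  have hs := Matrix.nonneg_iff_posSemidef.mp (CFC.sqrt_nonneg A)
  have hsq : CFC.sqrt A * CFC.sqrt A = A := CFC.sqrt_mul_sqrt_self A (Matrix.nonneg_iff_posSemidef.mpr hA)
  have : A * B = CFC.sqrt A * (CFC.sqrt A * B) := by rw [← Matrix.mul_assoc, hsq]
  rw [this, Matrix.trace_mul_comm, Matrix.mul_assoc]
  have hpsd : (CFC.sqrt A * B * CFC.sqrt A).PosSemidef := by
    have := hB.mul_mul_conjTranspose_same (CFC.sqrt A)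
    rwa [hs.isHermitian.eq] at this
  rw [← Matrix.mul_assoc]
  rw [Matrix.trace]
  rw [Complex.re_sum]
  apply Finset.sum_nonneg
  intro i _
  exact psd_diag_re_nonneg hpsd i

-- |re Tr(σ X)| ≤ re Tr σ for σ PSD and -1 ≤ X ≤ 1
lemma abs_re_trace_mul_le {σ X : Matrix (Fin d) (Fin d) ℂ} (hσ : σ.PosSemidef)
    (h1 : (1 - X).PosSemidef) (h2 : (1 + X).PosSemidef) :
    |((σ * X).trace).re| ≤ (σ.trace).re := by
  have k1 := trace_mul_psd_re_nonneg hσ h1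
  have k2 := trace_mul_psd_re_nonneg hσ h2
  rw [Matrix.mul_sub, Matrix.mul_one] at k1
  rw [Matrix.mul_add, Matrix.mul_one] at k2
  rw [Matrix.trace_sub] at k1
  rw [Matrix.trace_add] at k2
  simp only [Complex.sub_re, Complex.add_re] at k1 k2
  rw [abs_le]; constructor <;> linarith

-- contractivity of trace norm under CPTP maps
lemma traceNorm_kraus_le (M : Matrix (Fin d) (Fin d) ℂ) (hM : M.IsHermitian)
    (F : Fin m → Matrix (Fin d) (Fin d) ℂ) (hF : ∑ l, (F l)ᴴ * F l = 1) :
    traceNorm (∑ l, F l * M * (F l)ᴴ) ≤ traceNorm M := by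
  set N : Matrix (Fin d) (Fin d) ℂ := ∑ l, F l * M * (F l)ᴴ with hN
  have hNh : N.IsHermitian := by
    rw [Matrix.IsHermitian, hN, Matrix.conjTranspose_sum]
    apply Finset.sum_congr rfl
    intro l _
    simp [Matrix.conjTranspose_mul, Matrix.mul_assoc, hM.eq]
  obtain ⟨S, hS1, hS2, hS3⟩ := exists_dual N hNh
  rw [← hS3]
  set X : Matrix (Fin d) (Fin d) ℂ := ∑ l, (F l)ᴴ * S * F l with hX
  have key : (N * S).trace = (M * X).trace := by
    rw [hN, Matrix.sum_mul, Matrix.trace_sum, hX, Matrix.mul_sum, Matrix.trace_sum]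
    apply Finset.sum_congr rfl
    intro l _
    rw [show F l * M * (F l)ᴴ * S = (F l) * (M * ((F l)ᴴ * S)) by simp only [Matrix.mul_assoc],
      Matrix.trace_mul_comm,
      show M * ((F l)ᴴ * S) * F l = M * ((F l)ᴴ * S * F l) by simp only [Matrix.mul_assoc]]
  have hX1 : (1 - X).PosSemidef := by
    have : (1 : Matrix (Fin d) (Fin d) ℂ) - X = ∑ l, (F l)ᴴ * (1 - S) * F l := by
      simp only [Matrix.mul_sub, Matrix.sub_mul, Matrix.mul_one]
      rw [Finset.sum_sub_distrib, hF, hX]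
    rw [this]
    exact posSemidef_sum _ _ (fun l _ => by
      simpa [Matrix.star_eq_conjTranspose] using hS1.conjTranspose_mul_mul_same (F l))
  have hX2 : (1 + X).PosSemidef := by
    have : (1 : Matrix (Fin d) (Fin d) ℂ) + X = ∑ l, (F l)ᴴ * (1 + S) * F l := by
      simp only [Matrix.mul_add, Matrix.add_mul, Matrix.mul_one]
      rw [Finset.sum_add_distrib, hF, hX]
    rw [this]
    exact posSemidef_sum _ _ (fun l _ => by
      simpa [Matrix.star_eq_conjTranspose] using hS2.conjTranspose_mul_mul_same (F l))
  rw [key]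
  exact pair_le_traceNorm M X hM hX1 hX2

end TraceNormLemmas

/-! ### Auxiliary lemmas about the partial trace -/

section PtraceLemmas

variable {dA dB : ℕ}

lemma ptraceA_apply (M : Matrix (Fin dA × Fin dB) (Fin dA × Fin dB) ℂ) (i j : Fin dB) :
    ptraceA M i j = ∑ a, M (a, i) (a, j) := rfl

lemma ptraceA_sum {ι : Type*} (s : Finset ι)
    (f : ι → Matrix (Fin dA × Fin dB) (Fin dA × Fin dB) ℂ) :
    ptraceA (∑ l ∈ s, f l) = ∑ l ∈ s, ptraceA (f l) := by
  ext i j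
  simp only [ptraceA_apply, Matrix.sum_apply, ptraceA, Matrix.of_apply]
  rw [Finset.sum_comm]

lemma ptraceA_trace (M : Matrix (Fin dA × Fin dB) (Fin dA × Fin dB) ℂ) :
    (ptraceA M).trace = M.trace := by
  rw [Matrix.trace, Matrix.trace]
  simp only [Matrix.diag, ptraceA_apply]
  rw [Fintype.sum_prod_type]
  rw [Finset.sum_comm]

lemma ptraceA_conj_B (B D : Matrix (Fin dB) (Fin dB) ℂ)
    (M : Matrix (Fin dA × Fin dB) (Fin dA × Fin dB) ℂ) :
    ptraceA (((1 : Matrix (Fin dA) (Fin dA) ℂ) ⊗ₖ B) * M * ((1 : Matrix (Fin dA) (Fin dA) ℂ) ⊗ₖ D))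
      = B * ptraceA M * D := by
  ext i j
  simp only [ptraceA_apply, Matrix.mul_apply, Fintype.sum_prod_type,
    Matrix.kroneckerMap_apply, Matrix.one_apply, ite_mul, one_mul, zero_mul,
    mul_ite, mul_one, mul_zero, Finset.sum_ite_eq, Finset.sum_ite_eq',
    Finset.mem_univ, if_true]
  have step : ∀ x : Fin dA,
      (∑ x1 : Fin dA, ∑ x2 : Fin dB, if x1 = x then
        (∑ x3 : Fin dA, ∑ x4 : Fin dB, if x = x3 then B i x4 * M (x3, x4) (x1, x2) else 0)
          * D x2 j else 0)
      = ∑ x2 : Fin dB, (∑ x4 : Fin dB, B i x4 * M (x, x4) (x, x2)) * D x2 j := by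
    intro x
    rw [Finset.sum_comm]
    simp [Finset.sum_ite_eq, Finset.sum_ite_eq']
  rw [Finset.sum_congr rfl (fun x _ => step x)]
  rw [Finset.sum_comm]
  refine Finset.sum_congr rfl fun x2 _ => ?_
  rw [← Finset.sum_mul]
  congr 1
  rw [Finset.sum_comm]
  exact Finset.sum_congr rfl fun x4 _ => (Finset.mul_sum _ _ _).symm

lemma ptraceA_mul_comm (A : Matrix (Fin dA) (Fin dA) ℂ)
    (M : Matrix (Fin dA × Fin dB) (Fin dA × Fin dB) ℂ) :
    ptraceA ((A ⊗ₖ (1 : Matrix (Fin dB) (Fin dB) ℂ)) * M)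
      = ptraceA (M * (A ⊗ₖ (1 : Matrix (Fin dB) (Fin dB) ℂ))) := by
  ext i j
  simp only [ptraceA_apply, Matrix.mul_apply, Fintype.sum_prod_type,
    Matrix.kroneckerMap_apply, Matrix.one_apply, ite_mul, one_mul, zero_mul,
    mul_ite, mul_one, mul_zero, Finset.sum_ite_eq, Finset.sum_ite_eq',
    Finset.mem_univ, if_true]
  rw [Finset.sum_comm]
  exact Finset.sum_congr rfl fun x _ => Finset.sum_congr rfl fun y _ => mul_comm _ _

lemma kron_conjTranspose (A : Matrix (Fin dA) (Fin dA) ℂ) (B : Matrix (Fin dB) (Fin dB) ℂ) :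
    (A ⊗ₖ B)ᴴ = Aᴴ ⊗ₖ Bᴴ := by
  ext ⟨a, i⟩ ⟨b, j⟩
  simp [Matrix.conjTranspose_apply, Matrix.kroneckerMap_apply, mul_comm]

lemma kron_sum_right {ι : Type*} (s : Finset ι) (A : Matrix (Fin dA) (Fin dA) ℂ)
    (B : ι → Matrix (Fin dB) (Fin dB) ℂ) :
    A ⊗ₖ (∑ l ∈ s, B l) = ∑ l ∈ s, A ⊗ₖ B l := by
  ext ⟨a, i⟩ ⟨b, j⟩
  simp [Matrix.kroneckerMap_apply, Matrix.sum_apply, Finset.mul_sum]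

lemma kron_sum_left {ι : Type*} (s : Finset ι) (A : ι → Matrix (Fin dA) (Fin dA) ℂ)
    (B : Matrix (Fin dB) (Fin dB) ℂ) :
    (∑ k ∈ s, A k) ⊗ₖ B = ∑ k ∈ s, A k ⊗ₖ B := by
  ext ⟨a, i⟩ ⟨b, j⟩
  simp [Matrix.kroneckerMap_apply, Matrix.sum_apply, Finset.sum_mul]

lemma ptraceA_posSemidef (M : Matrix (Fin dA × Fin dB) (Fin dA × Fin dB) ℂ)
    (hM : M.PosSemidef) : (ptraceA M).PosSemidef := by
  refine Matrix.PosSemidef.of_dotProduct_mulVec_nonneg ?_ ?_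
  · ext i j
    rw [Matrix.conjTranspose_apply, ptraceA_apply, ptraceA_apply]
    rw [star_sum]
    apply Finset.sum_congr rfl
    intro a _
    rw [← Matrix.conjTranspose_apply, hM.1.eq]
  · intro x
    set y : Fin dA → (Fin dA × Fin dB → ℂ) := fun a p => if p.1 = a then x p.2 else 0 with hy
    have key : star x ⬝ᵥ (ptraceA M) *ᵥ x = ∑ a, star (y a) ⬝ᵥ M *ᵥ (y a) := by
      simp only [dotProduct, mulVec, ptraceA_apply, Pi.star_apply, hy,
        Fintype.sum_prod_type, apply_ite star, star_zero, ite_mul, zero_mul, mul_ite, mul_zero,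
        Finset.sum_ite_irrel, Finset.sum_const_zero,
        Finset.sum_ite_eq, Finset.sum_ite_eq', Finset.mem_univ, if_true]
      simp only [Finset.sum_mul, Finset.mul_sum]
      rw [Finset.sum_congr rfl fun i _ => Finset.sum_comm]
      rw [Finset.sum_comm]
    rw [key]
    exact Finset.sum_nonneg fun a _ => hM.dotProduct_mulVec_nonneg (y a)

open scoped MatrixOrder in
lemma ptraceA_mul_kron_psd {ρ : Matrix (Fin dA × Fin dB) (Fin dA × Fin dB) ℂ}
    (hρ : ρ.PosSemidef) {Q : Matrix (Fin dA) (Fin dA) ℂ} (hQ : Q.PosSemidef) :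
    (ptraceA (ρ * (Q ⊗ₖ (1 : Matrix (Fin dB) (Fin dB) ℂ)))).PosSemidef := by
  set R := CFC.sqrt Q with hR
  have hRh : R.IsHermitian := (Matrix.nonneg_iff_posSemidef.mp (CFC.sqrt_nonneg Q)).isHermitian
  have hQR : Q = R * R := (CFC.sqrt_mul_sqrt_self Q (Matrix.nonneg_iff_posSemidef.mpr hQ)).symm
  have hsplit : (Q ⊗ₖ (1 : Matrix (Fin dB) (Fin dB) ℂ))
      = (R ⊗ₖ (1 : Matrix (Fin dB) (Fin dB) ℂ)) * (R ⊗ₖ (1 : Matrix (Fin dB) (Fin dB) ℂ)) := by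
    rw [← Matrix.mul_kronecker_mul, ← hQR, Matrix.one_mul]
  rw [hsplit, ← Matrix.mul_assoc]
  rw [← ptraceA_mul_comm]
  have : (R ⊗ₖ (1 : Matrix (Fin dB) (Fin dB) ℂ)) * (ρ * (R ⊗ₖ (1 : Matrix (Fin dB) (Fin dB) ℂ)))
      = (R ⊗ₖ (1 : Matrix (Fin dB) (Fin dB) ℂ)) * ρ * ((R ⊗ₖ (1 : Matrix (Fin dB) (Fin dB) ℂ)))ᴴ := by
    rw [kron_conjTranspose, hRh.eq, Matrix.conjTranspose_one, Matrix.mul_assoc]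
  rw [this]
  exact ptraceA_posSemidef _ (hρ.mul_mul_conjTranspose_same _)

end PtraceLemmas

/-! ### Channel identities -/

section ChannelLemmas

variable {dA dB mA mB : ℕ}

lemma channel_trace (ρ : Matrix (Fin dA × Fin dB) (Fin dA × Fin dB) ℂ)
    (E : Fin mA → Matrix (Fin dA) (Fin dA) ℂ)
    (F : Fin mB → Matrix (Fin dB) (Fin dB) ℂ) (hF : ∑ l, (F l)ᴴ * F l = 1)
    (P : Matrix (Fin dA) (Fin dA) ℂ) :
    ((∑ k, ∑ l, (E k ⊗ₖ F l) * ρ * (E k ⊗ₖ F l)ᴴ) *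
        (P ⊗ₖ (1 : Matrix (Fin dB) (Fin dB) ℂ))).trace
      = (ρ * ((∑ k, (E k)ᴴ * P * E k) ⊗ₖ (1 : Matrix (Fin dB) (Fin dB) ℂ))).trace := by
  rw [Matrix.sum_mul, Matrix.trace_sum]
  have step : ∀ k, ((∑ l, (E k ⊗ₖ F l) * ρ * (E k ⊗ₖ F l)ᴴ) *
      (P ⊗ₖ (1 : Matrix (Fin dB) (Fin dB) ℂ))).trace
      = (ρ * (((E k)ᴴ * P * E k) ⊗ₖ (1 : Matrix (Fin dB) (Fin dB) ℂ))).trace := by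
    intro k
    rw [Matrix.sum_mul, Matrix.trace_sum]
    have term : ∀ l, (((E k ⊗ₖ F l) * ρ * (E k ⊗ₖ F l)ᴴ) *
        (P ⊗ₖ (1 : Matrix (Fin dB) (Fin dB) ℂ))).trace
        = (ρ * (((E k)ᴴ * P * E k) ⊗ₖ ((F l)ᴴ * F l))).trace := by
      intro l
      rw [kron_conjTranspose]
      rw [show (E k ⊗ₖ F l) * ρ * ((E k)ᴴ ⊗ₖ (F l)ᴴ) * (P ⊗ₖ (1 : Matrix (Fin dB) (Fin dB) ℂ))
          = (E k ⊗ₖ F l) * (ρ * (((E k)ᴴ ⊗ₖ (F l)ᴴ) * (P ⊗ₖ (1 : Matrix (Fin dB) (Fin dB) ℂ))))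
          by simp only [Matrix.mul_assoc]]
      rw [Matrix.trace_mul_comm]
      rw [show ρ * (((E k)ᴴ ⊗ₖ (F l)ᴴ) * (P ⊗ₖ (1 : Matrix (Fin dB) (Fin dB) ℂ))) * (E k ⊗ₖ F l)
          = ρ * (((E k)ᴴ ⊗ₖ (F l)ᴴ) * (P ⊗ₖ (1 : Matrix (Fin dB) (Fin dB) ℂ)) * (E k ⊗ₖ F l))
          by simp only [Matrix.mul_assoc]]
      congr 2
      rw [← Matrix.mul_kronecker_mul, ← Matrix.mul_kronecker_mul, Matrix.mul_one]
    rw [Finset.sum_congr rfl (fun l _ => term l)]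
    rw [← Matrix.trace_sum, ← Finset.mul_sum, ← kron_sum_right, hF]
  rw [Finset.sum_congr rfl (fun k _ => step k)]
  rw [← Matrix.trace_sum, ← Finset.mul_sum, ← kron_sum_left]

lemma channel_ptrace (ρ : Matrix (Fin dA × Fin dB) (Fin dA × Fin dB) ℂ)
    (E : Fin mA → Matrix (Fin dA) (Fin dA) ℂ)
    (F : Fin mB → Matrix (Fin dB) (Fin dB) ℂ)
    (P : Matrix (Fin dA) (Fin dA) ℂ) :
    ptraceA ((∑ k, ∑ l, (E k ⊗ₖ F l) * ρ * (E k ⊗ₖ F l)ᴴ) *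
        (P ⊗ₖ (1 : Matrix (Fin dB) (Fin dB) ℂ)))
      = ∑ l, F l * ptraceA (ρ * ((∑ k, (E k)ᴴ * P * E k) ⊗ₖ (1 : Matrix (Fin dB) (Fin dB) ℂ)))
          * (F l)ᴴ := by
  rw [Matrix.sum_mul, ptraceA_sum]
  have step : ∀ k, ptraceA ((∑ l, (E k ⊗ₖ F l) * ρ * (E k ⊗ₖ F l)ᴴ) *
      (P ⊗ₖ (1 : Matrix (Fin dB) (Fin dB) ℂ)))
      = ∑ l, F l * ptraceA (ρ * (((E k)ᴴ * P * E k) ⊗ₖ (1 : Matrix (Fin dB) (Fin dB) ℂ)))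
          * (F l)ᴴ := by
    intro k
    rw [Matrix.sum_mul, ptraceA_sum]
    apply Finset.sum_congr rfl
    intro l _
    rw [kron_conjTranspose]
    have h1 : ((E k)ᴴ ⊗ₖ (F l)ᴴ) * (P ⊗ₖ (1 : Matrix (Fin dB) (Fin dB) ℂ))
        = ((E k)ᴴ * P) ⊗ₖ (F l)ᴴ := by
      rw [← Matrix.mul_kronecker_mul, Matrix.mul_one]
    have h2 : (E k ⊗ₖ F l)
        = ((1 : Matrix (Fin dA) (Fin dA) ℂ) ⊗ₖ F l) *
          (E k ⊗ₖ (1 : Matrix (Fin dB) (Fin dB) ℂ)) := by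
      rw [← Matrix.mul_kronecker_mul, Matrix.one_mul, Matrix.mul_one]
    have h3 : ((E k)ᴴ * P) ⊗ₖ (F l)ᴴ
        = (((E k)ᴴ * P) ⊗ₖ (1 : Matrix (Fin dB) (Fin dB) ℂ)) *
          ((1 : Matrix (Fin dA) (Fin dA) ℂ) ⊗ₖ (F l)ᴴ) := by
      rw [← Matrix.mul_kronecker_mul, Matrix.mul_one, Matrix.one_mul]
    have e1 : (E k ⊗ₖ F l) * ρ * ((E k)ᴴ ⊗ₖ (F l)ᴴ) * (P ⊗ₖ (1 : Matrix (Fin dB) (Fin dB) ℂ))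
        = ((1 : Matrix (Fin dA) (Fin dA) ℂ) ⊗ₖ F l) *
          ((E k ⊗ₖ (1 : Matrix (Fin dB) (Fin dB) ℂ)) *
            (ρ * ((((E k)ᴴ * P) ⊗ₖ (1 : Matrix (Fin dB) (Fin dB) ℂ))))) *
          ((1 : Matrix (Fin dA) (Fin dA) ℂ) ⊗ₖ (F l)ᴴ) := by
      rw [show (E k ⊗ₖ F l) * ρ * ((E k)ᴴ ⊗ₖ (F l)ᴴ) * (P ⊗ₖ (1 : Matrix (Fin dB) (Fin dB) ℂ))
          = (E k ⊗ₖ F l) * (ρ * (((E k)ᴴ ⊗ₖ (F l)ᴴ) * (P ⊗ₖ (1 : Matrix (Fin dB) (Fin dB) ℂ))))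
          by simp only [Matrix.mul_assoc]]
      rw [h1, h2, h3]
      simp only [Matrix.mul_assoc]
    rw [e1, ptraceA_conj_B]
    rw [show (E k ⊗ₖ (1 : Matrix (Fin dB) (Fin dB) ℂ)) *
          (ρ * ((((E k)ᴴ * P) ⊗ₖ (1 : Matrix (Fin dB) (Fin dB) ℂ))))
        = (E k ⊗ₖ (1 : Matrix (Fin dB) (Fin dB) ℂ)) *
          (ρ * ((((E k)ᴴ * P) ⊗ₖ (1 : Matrix (Fin dB) (Fin dB) ℂ)))) from rfl]
    rw [ptraceA_mul_comm]
    congr 2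
    rw [Matrix.mul_assoc, ← Matrix.mul_kronecker_mul, Matrix.one_mul]
  rw [Finset.sum_congr rfl (fun k _ => step k)]
  rw [Finset.sum_comm]
  apply Finset.sum_congr rfl
  intro l _
  rw [← Finset.sum_mul, ← Finset.mul_sum]
  congr 2
  rw [← ptraceA_sum, ← Finset.mul_sum, ← kron_sum_left]

end ChannelLemmas

/-! ### Boundedness and nonnegativity of the defining set -/

section SetLemmas

variable {dA dB : ℕ}

lemma herm_diff {σ₁ σ₂ : Matrix (Fin dB) (Fin dB) ℂ} (h₁ : σ₁.IsHermitian)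
    (h₂ : σ₂.IsHermitian) : ((2 : ℂ) • σ₁ - (2 : ℂ) • σ₂).IsHermitian := by
  rw [Matrix.IsHermitian, Matrix.conjTranspose_sub, Matrix.conjTranspose_smul, h₁.eq,
    Matrix.conjTranspose_smul, h₂.eq]
  norm_num

lemma bddAbove_CA2set (ρ : Matrix (Fin dA × Fin dB) (Fin dA × Fin dB) ℂ)
    (hρ : ρ.PosSemidef) :
    BddAbove { x : ℝ | ∃ P₁ P₂ : Matrix (Fin dA) (Fin dA) ℂ,
      P₁.PosSemidef ∧ P₂.PosSemidef ∧ P₁ + P₂ = 1 ∧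
      (ρ * (P₁ ⊗ₖ (1 : Matrix (Fin dB) (Fin dB) ℂ))).trace = 1/2 ∧
      (ρ * (P₂ ⊗ₖ (1 : Matrix (Fin dB) (Fin dB) ℂ))).trace = 1/2 ∧
      x = traceNorm ((2 : ℂ) • ptraceA (ρ * (P₁ ⊗ₖ (1 : Matrix (Fin dB) (Fin dB) ℂ)))
            - (2 : ℂ) • ptraceA (ρ * (P₂ ⊗ₖ (1 : Matrix (Fin dB) (Fin dB) ℂ)))) / 4 } := by
  refine ⟨1/2, ?_⟩
  rintro x ⟨P₁, P₂, hP₁, hP₂, -, ht1, ht2, rfl⟩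
  set σ₁ := ptraceA (ρ * (P₁ ⊗ₖ (1 : Matrix (Fin dB) (Fin dB) ℂ))) with hσ₁
  set σ₂ := ptraceA (ρ * (P₂ ⊗ₖ (1 : Matrix (Fin dB) (Fin dB) ℂ))) with hσ₂
  have hpsd₁ : σ₁.PosSemidef := ptraceA_mul_kron_psd hρ hP₁
  have hpsd₂ : σ₂.PosSemidef := ptraceA_mul_kron_psd hρ hP₂
  have hΔ : ((2 : ℂ) • σ₁ - (2 : ℂ) • σ₂).IsHermitian :=
    herm_diff hpsd₁.isHermitian hpsd₂.isHermitian
  obtain ⟨X, hX1, hX2, hX3⟩ := exists_dual _ hΔ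
  have htr₁ : (σ₁.trace).re = 1/2 := by
    rw [hσ₁, ptraceA_trace, ht1]; norm_num
  have htr₂ : (σ₂.trace).re = 1/2 := by
    rw [hσ₂, ptraceA_trace, ht2]; norm_num
  have b₁ := abs_re_trace_mul_le hpsd₁ hX1 hX2
  have b₂ := abs_re_trace_mul_le hpsd₂ hX1 hX2
  rw [htr₁] at b₁
  rw [htr₂] at b₂
  have hexp : (((2 : ℂ) • σ₁ - (2 : ℂ) • σ₂) * X).trace
      = 2 * (σ₁ * X).trace - 2 * (σ₂ * X).trace := by
    rw [Matrix.sub_mul, Matrix.smul_mul, Matrix.smul_mul, Matrix.trace_sub,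
      Matrix.trace_smul, Matrix.trace_smul]
    simp [smul_eq_mul]
  have : traceNorm ((2 : ℂ) • σ₁ - (2 : ℂ) • σ₂) ≤ 2 := by
    rw [← hX3, hexp]
    have habs₁ : |((σ₁ * X).trace).re| ≤ 1/2 := b₁
    have habs₂ : |((σ₂ * X).trace).re| ≤ 1/2 := b₂
    rw [abs_le] at habs₁ habs₂
    simp only [Complex.sub_re, Complex.mul_re, Complex.re_ofNat, Complex.im_ofNat]
    simp only [zero_mul, sub_zero]
    linarith
  calc traceNorm ((2 : ℂ) • σ₁ - (2 : ℂ) • σ₂) / 4 ≤ 2 / 4 := by linarith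
  _ = 1/2 := by norm_num

lemma zero_mem_CA2set (ρ : Matrix (Fin dA × Fin dB) (Fin dA × Fin dB) ℂ)
    (hρ : IsDensity ρ) :
    (0 : ℝ) ∈ { x : ℝ | ∃ P₁ P₂ : Matrix (Fin dA) (Fin dA) ℂ,
      P₁.PosSemidef ∧ P₂.PosSemidef ∧ P₁ + P₂ = 1 ∧
      (ρ * (P₁ ⊗ₖ (1 : Matrix (Fin dB) (Fin dB) ℂ))).trace = 1/2 ∧
      (ρ * (P₂ ⊗ₖ (1 : Matrix (Fin dB) (Fin dB) ℂ))).trace = 1/2 ∧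
      x = traceNorm ((2 : ℂ) • ptraceA (ρ * (P₁ ⊗ₖ (1 : Matrix (Fin dB) (Fin dB) ℂ)))
            - (2 : ℂ) • ptraceA (ρ * (P₂ ⊗ₖ (1 : Matrix (Fin dB) (Fin dB) ℂ)))) / 4 } := by
  set P : Matrix (Fin dA) (Fin dA) ℂ := ((1 : ℂ)/2) • 1 with hP
  have hPdiag : P = diagonal (fun _ => (1 : ℂ)/2) := by
    ext i j
    by_cases h : i = j <;> simp [hP, Matrix.smul_apply, Matrix.one_apply, Matrix.diagonal_apply, h]
  have hPpsd : P.PosSemidef := by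
    rw [hPdiag]
    exact Matrix.PosSemidef.diagonal (fun i => by
      rw [show (1 : ℂ)/2 = ((1/2 : ℝ) : ℂ) by norm_num]
      exact Complex.zero_le_real.mpr (by norm_num))
  have hPP : P + P = 1 := by
    rw [hP, ← add_smul]
    norm_num
  have hPk : P ⊗ₖ (1 : Matrix (Fin dB) (Fin dB) ℂ)
      = ((1 : ℂ)/2) • (1 : Matrix (Fin dA × Fin dB) (Fin dA × Fin dB) ℂ) := by
    rw [hP, Matrix.smul_kronecker, Matrix.one_kronecker_one]
  have htr : (ρ * (P ⊗ₖ (1 : Matrix (Fin dB) (Fin dB) ℂ))).trace = 1/2 := by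
    rw [hPk, Matrix.mul_smul, Matrix.mul_one, Matrix.trace_smul, hρ.2]
    norm_num
  exact ⟨P, P, hPpsd, hPpsd, hPP, htr, htr, by simp [traceNorm_zero]⟩

end SetLemmas

/-- `C_A^{(2)}` is monotone nonincreasing under local channels `Λ_A ⊗ Λ_B`, with the
channels given by Kraus operators `E k` (on `A`) and `F l` (on `B`). -/
theorem CA2_monotone_local_channels (dA dB mA mB : ℕ)
    (ρ : Matrix (Fin dA × Fin dB) (Fin dA × Fin dB) ℂ) (hρ : IsDensity ρ)
    (E : Fin mA → Matrix (Fin dA) (Fin dA) ℂ) (hE : ∑ k, (E k)ᴴ * E k = 1)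
    (F : Fin mB → Matrix (Fin dB) (Fin dB) ℂ) (hF : ∑ l, (F l)ᴴ * F l = 1) :
    CA2 (∑ k, ∑ l, (E k ⊗ₖ F l) * ρ * (E k ⊗ₖ F l)ᴴ) ≤ CA2 ρ := by
  set σ := ∑ k, ∑ l, (E k ⊗ₖ F l) * ρ * (E k ⊗ₖ F l)ᴴ with hσ
  have hbdd := bddAbove_CA2set ρ hρ.1
  have h0 : (0 : ℝ) ≤ CA2 ρ := le_csSup hbdd (zero_mem_CA2set ρ hρ)
  apply Real.sSup_le _ h0
  rintro x ⟨P₁, P₂, hP₁, hP₂, hsum, ht1, ht2, rfl⟩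
  set Q₁ : Matrix (Fin dA) (Fin dA) ℂ := ∑ k, (E k)ᴴ * P₁ * E k with hQ₁
  set Q₂ : Matrix (Fin dA) (Fin dA) ℂ := ∑ k, (E k)ᴴ * P₂ * E k with hQ₂
  have hQ₁psd : Q₁.PosSemidef :=
    posSemidef_sum _ _ (fun k _ => hP₁.conjTranspose_mul_mul_same (E k))
  have hQ₂psd : Q₂.PosSemidef :=
    posSemidef_sum _ _ (fun k _ => hP₂.conjTranspose_mul_mul_same (E k))
  have hQsum : Q₁ + Q₂ = 1 := by
    rw [hQ₁, hQ₂, ← Finset.sum_add_distrib, ← hE]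
    apply Finset.sum_congr rfl
    intro k _
    rw [← Matrix.add_mul, ← Matrix.mul_add, hsum, Matrix.mul_one]
  have htQ₁ : (ρ * (Q₁ ⊗ₖ (1 : Matrix (Fin dB) (Fin dB) ℂ))).trace = 1/2 := by
    rw [hQ₁, ← channel_trace ρ E F hF P₁]; exact ht1
  have htQ₂ : (ρ * (Q₂ ⊗ₖ (1 : Matrix (Fin dB) (Fin dB) ℂ))).trace = 1/2 := by
    rw [hQ₂, ← channel_trace ρ E F hF P₂]; exact ht2
  set τ₁ := ptraceA (ρ * (Q₁ ⊗ₖ (1 : Matrix (Fin dB) (Fin dB) ℂ))) with hτ₁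
  set τ₂ := ptraceA (ρ * (Q₂ ⊗ₖ (1 : Matrix (Fin dB) (Fin dB) ℂ))) with hτ₂
  have hτ₁psd : τ₁.PosSemidef := ptraceA_mul_kron_psd hρ.1 hQ₁psd
  have hτ₂psd : τ₂.PosSemidef := ptraceA_mul_kron_psd hρ.1 hQ₂psd
  set Δ := (2 : ℂ) • τ₁ - (2 : ℂ) • τ₂ with hΔ
  have hΔh : Δ.IsHermitian := herm_diff hτ₁psd.isHermitian hτ₂psd.isHermitian
  -- rewrite the post-channel matrix as a Kraus image of Δ
  have hmatch : (2 : ℂ) • ptraceA (σ * (P₁ ⊗ₖ (1 : Matrix (Fin dB) (Fin dB) ℂ)))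
      - (2 : ℂ) • ptraceA (σ * (P₂ ⊗ₖ (1 : Matrix (Fin dB) (Fin dB) ℂ)))
      = ∑ l, F l * Δ * (F l)ᴴ := by
    rw [hσ, channel_ptrace ρ E F P₁, channel_ptrace ρ E F P₂, ← hQ₁, ← hQ₂, ← hτ₁, ← hτ₂]
    rw [Finset.smul_sum, Finset.smul_sum, ← Finset.sum_sub_distrib]
    apply Finset.sum_congr rfl
    intro l _
    simp only [hΔ, Matrix.mul_sub, Matrix.sub_mul, Matrix.mul_smul, Matrix.smul_mul]
  have hval : traceNorm ((2 : ℂ) • ptraceA (σ * (P₁ ⊗ₖ (1 : Matrix (Fin dB) (Fin dB) ℂ)))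
      - (2 : ℂ) • ptraceA (σ * (P₂ ⊗ₖ (1 : Matrix (Fin dB) (Fin dB) ℂ)))) / 4
      ≤ traceNorm Δ / 4 := by
    rw [hmatch]
    have := traceNorm_kraus_le Δ hΔh F hF
    linarith
  have hmem : traceNorm Δ / 4 ∈ { x : ℝ | ∃ P₁ P₂ : Matrix (Fin dA) (Fin dA) ℂ,
      P₁.PosSemidef ∧ P₂.PosSemidef ∧ P₁ + P₂ = 1 ∧
      (ρ * (P₁ ⊗ₖ (1 : Matrix (Fin dB) (Fin dB) ℂ))).trace = 1/2 ∧
      (ρ * (P₂ ⊗ₖ (1 : Matrix (Fin dB) (Fin dB) ℂ))).trace = 1/2 ∧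
      x = traceNorm ((2 : ℂ) • ptraceA (ρ * (P₁ ⊗ₖ (1 : Matrix (Fin dB) (Fin dB) ℂ)))
            - (2 : ℂ) • ptraceA (ρ * (P₂ ⊗ₖ (1 : Matrix (Fin dB) (Fin dB) ℂ)))) / 4 } :=
    ⟨Q₁, Q₂, hQ₁psd, hQ₂psd, hQsum, htQ₁, htQ₂, rfl⟩
  exact le_trans hval (le_csSup hbdd hmem)
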